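/- (Feasibility of Ben-Tal–Nemirovski implies quadratic Positivstellensatz feasibility.) Suppose X₁,…,X_m ∈ S^n satisfy H₀ - Σ X_i ⪰ 0 and X_i ± H_i ⪰ 0 for all i, where all X_i are positive definite. Then there exist an SOS quadratic polynomial matrix S₀ ∈ Σ[δ]^n of degree ≤ 2 and positive semidefinite constant matrices S₁,…,S_m ∈ S^n such that H₀ + Σ δ_i H_i = S₀(δ) + Σ_{i=1}^m (1 - δ_i²)·S_i identically in δ. -/

import Mathlib

open Matrix MvPolynomial

/-- A symmetric polynomial matrix `S` is a sum of squares if `S = T * Tᵀ`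
for some polynomial matrix `T`. -/
def IsSOSMatrix {n m : ℕ} (S : Matrix (Fin n) (Fin n) (MvPolynomial (Fin m) ℝ)) : Prop :=
  ∃ (q : ℕ) (T : Matrix (Fin n) (Fin q) (MvPolynomial (Fin m) ℝ)), S = T * Tᵀ

lemma isSOS_zero {n m : ℕ} : IsSOSMatrix (0 : Matrix (Fin n) (Fin n) (MvPolynomial (Fin m) ℝ)) :=
  ⟨0, 0, by ext i j; simp [Matrix.mul_apply]⟩

lemma isSOS_add {n m : ℕ} {S S' : Matrix (Fin n) (Fin n) (MvPolynomial (Fin m) ℝ)}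
    (h : IsSOSMatrix S) (h' : IsSOSMatrix S') : IsSOSMatrix (S + S') := by
  obtain ⟨q, T, rfl⟩ := h
  obtain ⟨q', T', rfl⟩ := h'
  refine ⟨q + q', (fromCols T T').submatrix id ⇑finSumFinEquiv.symm, ?_⟩
  rw [transpose_submatrix, submatrix_mul_equiv, transpose_fromCols,
    fromCols_mul_fromRows, submatrix_id_id]

lemma isSOS_sq_smul {n m : ℕ} (p : MvPolynomial (Fin m) ℝ)
    {A : Matrix (Fin n) (Fin n) ℝ} (hA : A.PosSemidef) :
    IsSOSMatrix (p ^ 2 • (A.map MvPolynomial.C : Matrix (Fin n) (Fin n) (MvPolynomial (Fin m) ℝ))) := by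
  obtain ⟨B, rfl⟩ : ∃ B : Matrix (Fin n) (Fin n) ℝ, A = B * Bᵀ := by
    open scoped MatrixOrder in
    obtain ⟨B, hB, -, rfl⟩ := CFC.exists_sqrt_of_isSelfAdjoint_of_quasispectrumRestricts
      hA.isHermitian (QuasispectrumRestricts.nnreal_of_nonneg hA.nonneg)
    exact ⟨B, by rw [← conjTranspose_eq_transpose_of_trivial, Matrix.IsHermitian.eq (A := B) hB]⟩
  refine ⟨n, p • (B.map MvPolynomial.C : Matrix (Fin n) (Fin n) (MvPolynomial (Fin m) ℝ)), ?_⟩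
  rw [Matrix.transpose_smul, Matrix.smul_mul, Matrix.mul_smul, smul_smul, ← sq,
    ← Matrix.transpose_map, ← Matrix.map_mul]

lemma isSOS_const {n m : ℕ} {A : Matrix (Fin n) (Fin n) ℝ} (hA : A.PosSemidef) :
    IsSOSMatrix ((A.map MvPolynomial.C : Matrix (Fin n) (Fin n) (MvPolynomial (Fin m) ℝ))) := by
  simpa using isSOS_sq_smul 1 hA

lemma isSOS_sum {n m : ℕ} {ι : Type*} (s : Finset ι)
    (f : ι → Matrix (Fin n) (Fin n) (MvPolynomial (Fin m) ℝ))
    (h : ∀ i ∈ s, IsSOSMatrix (f i)) : IsSOSMatrix (∑ i ∈ s, f i) :=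
  Finset.sum_induction f _ (fun _ _ => isSOS_add) isSOS_zero h

lemma psd_smul {n : ℕ} {A : Matrix (Fin n) (Fin n) ℝ} (hA : A.PosSemidef) {c : ℝ} (hc : 0 ≤ c) :
    (c • A).PosSemidef := by
  constructor
  · rw [Matrix.IsHermitian, conjTranspose_smul, star_trivial, hA.1.eq]
  · exact (hA.smul hc).2

theorem bental_implies_quadratic_psatz {n m : ℕ}
    (H₀ : Matrix (Fin n) (Fin n) ℝ) (H X : Fin m → Matrix (Fin n) (Fin n) ℝ)
    (h0 : H₀.IsSymm) (hH : ∀ i, (H i).IsSymm) (hX : ∀ i, (X i).IsSymm)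
    (hXpd : ∀ i, (X i).PosDef)
    (h1 : (H₀ - ∑ i : Fin m, X i).PosSemidef)
    (h2 : ∀ i, (X i + H i).PosSemidef)
    (h3 : ∀ i, (X i - H i).PosSemidef) :
    ∃ (S₀ : Matrix (Fin n) (Fin n) (MvPolynomial (Fin m) ℝ))
      (S : Fin m → Matrix (Fin n) (Fin n) ℝ),
      IsSOSMatrix S₀ ∧ (∀ a b, (S₀ a b).totalDegree ≤ 2) ∧
      (∀ i, (S i).PosSemidef) ∧
      H₀.map MvPolynomial.C +
          ∑ i : Fin m, (MvPolynomial.X i : MvPolynomial (Fin m) ℝ) • (H i).map MvPolynomial.C =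
        S₀ + ∑ i : Fin m,
          ((1 : MvPolynomial (Fin m) ℝ) - MvPolynomial.X i ^ 2) • (S i).map MvPolynomial.C := by
  refine ⟨(H₀ - ∑ i : Fin m, X i).map MvPolynomial.C +
      ∑ i : Fin m,
        (((1 : MvPolynomial (Fin m) ℝ) + MvPolynomial.X i) ^ 2 •
            (((4⁻¹ : ℝ) • (X i + H i)).map MvPolynomial.C) +
          ((1 : MvPolynomial (Fin m) ℝ) - MvPolynomial.X i) ^ 2 •
            (((4⁻¹ : ℝ) • (X i - H i)).map MvPolynomial.C)),
    fun i => (2⁻¹ : ℝ) • X i, ?_, ?_, ?_, ?_⟩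
  · refine isSOS_add (isSOS_const h1) (isSOS_sum _ _ fun i _ => isSOS_add ?_ ?_)
    · exact isSOS_sq_smul _ (psd_smul (h2 i) (by norm_num))
    · exact isSOS_sq_smul _ (psd_smul (h3 i) (by norm_num))
  · intro a b
    have key : ∀ (p : MvPolynomial (Fin m) ℝ), p.totalDegree ≤ 1 → ∀ r : ℝ,
        (p ^ 2 * MvPolynomial.C r).totalDegree ≤ 2 := by
      intro p hp r
      refine (totalDegree_mul _ _).trans ?_
      rw [totalDegree_C, add_zero]
      calc (p ^ 2).totalDegree ≤ 2 * p.totalDegree := totalDegree_pow _ _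
        _ ≤ 2 := by omega
    have h1p : ∀ i : Fin m, ((1 : MvPolynomial (Fin m) ℝ) + MvPolynomial.X i).totalDegree ≤ 1 :=
      fun i => (totalDegree_add _ _).trans (by simp [totalDegree_X, totalDegree_one])
    have h1m : ∀ i : Fin m, ((1 : MvPolynomial (Fin m) ℝ) - MvPolynomial.X i).totalDegree ≤ 1 :=
      fun i => (totalDegree_sub _ _).trans (by simp [totalDegree_X, totalDegree_one])
    simp only [Matrix.add_apply, Matrix.sum_apply, Matrix.smul_apply, Matrix.map_apply,
      smul_eq_mul]
    refine (totalDegree_add _ _).trans (max_le ?_ ?_)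
    · refine le_trans ?_ (Nat.zero_le 2)
      simp only [← map_sub, totalDegree_C, le_refl]
    · refine (totalDegree_finset_sum _ _).trans (Finset.sup_le fun i _ => ?_)
      exact (totalDegree_add _ _).trans (max_le (key _ (h1p i) _) (key _ (h1m i) _))
  · intro i
    exact psd_smul (hXpd i).posSemidef (by norm_num)
  · refine Matrix.ext fun a b => MvPolynomial.funext fun v => ?_
    simp only [Matrix.add_apply, Matrix.sum_apply, Matrix.smul_apply, Matrix.map_apply,
      Matrix.sub_apply, smul_eq_mul, _root_.map_sum, _root_.map_mul, _root_.map_add,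
      _root_.map_sub, _root_.map_pow, _root_.map_one, eval_C, eval_X]
    have key : ∀ i ∈ (Finset.univ : Finset (Fin m)), v i * H i a b =
        ((1 + v i) ^ 2 * (4⁻¹ * (X i a b + H i a b)) +
          (1 - v i) ^ 2 * (4⁻¹ * (X i a b - H i a b))) +
          (1 - v i ^ 2) * (2⁻¹ * X i a b) - X i a b := fun i _ => by ring
    rw [Finset.sum_congr rfl key, Finset.sum_sub_distrib, Finset.sum_add_distrib]
    ring
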